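/- Let F_n be the free group on x_1,…,x_n, RF_n the reduced free group, and fix i ∈ {1,…,n}. For g ∈ F_n, the commutator [x_i, g] maps to the identity of RF_n if and only if E(g) = 1 + (terms containing X_i) + (repeated terms); that is, every non-repeated monomial of E(g) − 1 that has nonzero coefficient contains the variable X_i. -/

import Mathlib

/-- Coefficient function of the Magnus expansion of a single letter `x_i^{±1}`:
`x_i ↦ 1 + X_i` and `x_i⁻¹ ↦ 1 - X_i + X_i² - ⋯`. -/
def genCoeff {n : ℕ} (i : Fin n) (b : Bool) (l : List (Fin n)) : ℤ :=
  if b then (if l = [] ∨ l = [i] then 1 else 0)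
  else (if l.all (· = i) then (-1) ^ l.length else 0)

/-- Convolution product on coefficient functions of noncommutative power series. -/
def conv {n : ℕ} (f g : List (Fin n) → ℤ) (l : List (Fin n)) : ℤ :=
  ∑ k ∈ Finset.range (l.length + 1), f (l.take k) * g (l.drop k)

/-- Coefficients of the Magnus expansion of a word in the letters `x_i^{±1}`. -/
def wordCoeff {n : ℕ} : List (Fin n × Bool) → List (Fin n) → ℤ
  | [] => fun l => if l = [] then 1 else 0
  | p :: rest => conv (genCoeff p.1 p.2) (wordCoeff rest)

/-- `magnus w l` is the coefficient of the noncommutative monomial `X_{l}` in the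
Magnus expansion `E(w) ∈ ℤ⟨⟨X_1,…,X_n⟩⟩` of the free group element `w`. -/
def magnus {n : ℕ} (w : FreeGroup (Fin n)) (l : List (Fin n)) : ℤ :=
  wordCoeff w.toWord l


/-- The set of relators `[x_i, w⁻¹ x_i w]` (with `[a,b] = a⁻¹b⁻¹ab`) in the free group. -/
def redRelators (n : ℕ) : Set (FreeGroup (Fin n)) :=
  {r | ∃ (i : Fin n) (w : FreeGroup (Fin n)),
    r = (FreeGroup.of i)⁻¹ * (w⁻¹ * FreeGroup.of i * w)⁻¹ *
        FreeGroup.of i * (w⁻¹ * FreeGroup.of i * w)}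

/-- The reduced free group `RF_n`. -/
def RF (n : ℕ) := FreeGroup (Fin n) ⧸ Subgroup.normalClosure (redRelators n)

instance (n : ℕ) : Group (RF n) := by unfold RF; infer_instance


set_option maxHeartbeats 1000000 in
theorem _dummy_heartbeat : True := trivial

set_option maxHeartbeats 1000000

namespace RFproof

variable {n : ℕ}

/-- Nodup lists over `Fin n`: the monomial basis of the reduced algebra. -/
abbrev ND (n : ℕ) := {l : List (Fin n) // l.Nodup}

/-- The reduced Magnus algebra: coefficient functions on nodup monomials. -/
def R (n : ℕ) := ND n → ℤ

namespace R

instance : AddCommGroup (R n) := inferInstanceAs (AddCommGroup (ND n → ℤ))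

theorem nodup_take {l : List (Fin n)} (hl : l.Nodup) (k : ℕ) : (l.take k).Nodup :=
  (List.take_sublist k l).nodup hl

theorem nodup_drop {l : List (Fin n)} (hl : l.Nodup) (k : ℕ) : (l.drop k).Nodup :=
  (List.drop_sublist k l).nodup hl

def mul' (f g : R n) : R n := fun l =>
  ∑ k ∈ Finset.range (l.1.length + 1),
    f ⟨l.1.take k, nodup_take l.2 k⟩ * g ⟨l.1.drop k, nodup_drop l.2 k⟩

instance : Mul (R n) := ⟨mul'⟩

instance : One (R n) := ⟨fun l => if l.1 = [] then 1 else 0⟩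

theorem mul_def (f g : R n) (l : List (Fin n)) (hl : l.Nodup) :
    (f * g) ⟨l, hl⟩ = ∑ k ∈ Finset.range (l.length + 1),
      f ⟨l.take k, nodup_take hl k⟩ * g ⟨l.drop k, nodup_drop hl k⟩ := rfl

theorem one_def (l : ND n) : (1 : R n) l = if l.1 = [] then 1 else 0 := rfl

theorem app_congr' (f : R n) {a b : List (Fin n)} {ha : a.Nodup} {hb : b.Nodup} (h : a = b) :
    f ⟨a, ha⟩ = f ⟨b, hb⟩ := by subst h; rfl

theorem mul_assoc' (f g h : R n) : f * g * h = f * (g * h) := by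
  funext l
  obtain ⟨l, hl⟩ := l
  rw [mul_def, mul_def]
  have LHS : (∑ k ∈ Finset.range (l.length + 1),
      (f * g) ⟨l.take k, nodup_take hl k⟩ * h ⟨l.drop k, nodup_drop hl k⟩) =
      ∑ k ∈ Finset.range (l.length + 1), ∑ j ∈ Finset.range (k + 1),
        f ⟨l.take j, nodup_take hl j⟩ *
          g ⟨(l.drop j).take (k - j), nodup_take (nodup_drop hl j) (k-j)⟩ *
          h ⟨l.drop k, nodup_drop hl k⟩ := by
    refine Finset.sum_congr rfl fun k hk => ?_
    rw [Finset.mem_range] at hk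
    have hk' : k ≤ l.length := Nat.lt_succ_iff.mp hk
    rw [mul_def, Finset.sum_mul]
    have hlen : (l.take k).length = k := by
      rw [List.length_take]; omega
    rw [Finset.sum_congr (by rw [hlen]) (fun j hj => rfl)]
    refine Finset.sum_congr rfl fun j hj => ?_
    rw [Finset.mem_range] at hj
    rw [app_congr' f (a := (l.take k).take j) (b := l.take j)
      (by rw [List.take_take]; congr 1; omega),
      app_congr' g (a := (l.take k).drop j) (b := (l.drop j).take (k - j))
      (by rw [List.drop_take])]
  have RHS : (∑ j ∈ Finset.range (l.length + 1),
      f ⟨l.take j, nodup_take hl j⟩ * (g * h) ⟨l.drop j, nodup_drop hl j⟩) =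
      ∑ j ∈ Finset.range (l.length + 1), ∑ k' ∈ Finset.range (l.length - j + 1),
        f ⟨l.take j, nodup_take hl j⟩ *
          (g ⟨(l.drop j).take k', nodup_take (nodup_drop hl j) k'⟩ *
           h ⟨l.drop (j + k'), nodup_drop hl (j + k')⟩) := by
    refine Finset.sum_congr rfl fun j hj => ?_
    rw [Finset.mem_range] at hj
    rw [mul_def, Finset.mul_sum]
    have hlen : (l.drop j).length = l.length - j := by rw [List.length_drop]
    rw [Finset.sum_congr (by rw [hlen]) (fun k' hk' => rfl)]
    refine Finset.sum_congr rfl fun k' hk' => ?_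
    rw [app_congr' h (a := (l.drop j).drop k') (b := l.drop (j + k'))
      (by rw [List.drop_drop])]
  rw [LHS, RHS]
  rw [Finset.sum_sigma', Finset.sum_sigma']
  refine Finset.sum_nbij' (fun x => ⟨x.2, x.1 - x.2⟩) (fun x => ⟨x.1 + x.2, x.1⟩) ?_ ?_ ?_ ?_ ?_
  · rintro ⟨k, j⟩ hm
    simp only [Finset.mem_sigma, Finset.mem_range] at hm ⊢
    omega
  · rintro ⟨j, k'⟩ hm
    simp only [Finset.mem_sigma, Finset.mem_range] at hm ⊢
    omega
  · rintro ⟨k, j⟩ hm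
    simp only [Finset.mem_sigma, Finset.mem_range] at hm
    have : j + (k - j) = k := by omega
    simp [this]
  · rintro ⟨j, k'⟩ hm
    simp only [Finset.mem_sigma, Finset.mem_range] at hm
    have : j + k' - j = k' := by omega
    simp [this]
  · rintro ⟨k, j⟩ hm
    simp only [Finset.mem_sigma, Finset.mem_range] at hm
    dsimp only
    have hjk : j + (k - j) = k := by omega
    rw [mul_assoc, app_congr' h (a := l.drop k) (b := l.drop (j + (k - j))) (by rw [hjk])]


theorem one_mul' (f : R n) : 1 * f = f := by
  funext l
  obtain ⟨l, hl⟩ := l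
  rw [mul_def]
  rw [Finset.sum_eq_single 0]
  · rw [show (1:R n) ⟨l.take 0, nodup_take hl 0⟩ = 1 from if_pos rfl, one_mul,
      app_congr' f (a := l.drop 0) (b := l) List.drop_zero]
  · intro k hk hk0
    rw [Finset.mem_range] at hk
    have : ¬ (l.take k = []) := by
      rw [List.take_eq_nil_iff]
      rintro (h | h)
      · exact hk0 h
      · subst h; simp at hk; exact hk0 hk
    rw [show (1:R n) ⟨l.take k, nodup_take hl k⟩ = 0 from if_neg this, zero_mul]
  · intro h
    simp at h

theorem mul_one' (f : R n) : f * 1 = f := by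
  funext l
  obtain ⟨l, hl⟩ := l
  rw [mul_def]
  rw [Finset.sum_eq_single l.length]
  · rw [show (1:R n) ⟨l.drop l.length, nodup_drop hl l.length⟩ = 1 from if_pos List.drop_length,
      mul_one, app_congr' f (a := l.take l.length) (b := l) List.take_length]
  · intro k hk hk0
    rw [Finset.mem_range] at hk
    have : ¬ (l.drop k = []) := by
      rw [List.drop_eq_nil_iff]
      omega
    rw [show (1:R n) ⟨l.drop k, nodup_drop hl k⟩ = 0 from if_neg this, mul_zero]
  · intro h
    simp at h

theorem left_distrib' (f g h : R n) : f * (g + h) = f * g + f * h := by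
  funext l
  obtain ⟨l, hl⟩ := l
  show (f * (g+h)) ⟨l,hl⟩ = (f * g) ⟨l,hl⟩ + (f * h) ⟨l,hl⟩
  rw [mul_def, mul_def, mul_def, ← Finset.sum_add_distrib]
  refine Finset.sum_congr rfl fun k hk => ?_
  show f _ * ((g _) + (h _)) = _
  rw [mul_add]

theorem right_distrib' (f g h : R n) : (f + g) * h = f * h + g * h := by
  funext l
  obtain ⟨l, hl⟩ := l
  show ((f+g) * h) ⟨l,hl⟩ = (f * h) ⟨l,hl⟩ + (g * h) ⟨l,hl⟩
  rw [mul_def, mul_def, mul_def, ← Finset.sum_add_distrib]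
  refine Finset.sum_congr rfl fun k hk => ?_
  show ((f _) + (g _)) * h _ = _
  rw [add_mul]

theorem zero_mul' (f : R n) : 0 * f = 0 := by
  funext l
  obtain ⟨l, hl⟩ := l
  rw [mul_def]
  refine Finset.sum_eq_zero fun k hk => ?_
  show (0:ℤ) * _ = 0
  rw [zero_mul]

theorem mul_zero' (f : R n) : f * 0 = 0 := by
  funext l
  obtain ⟨l, hl⟩ := l
  rw [mul_def]
  refine Finset.sum_eq_zero fun k hk => ?_
  show _ * (0:ℤ) = 0
  rw [mul_zero]

instance instRing : Ring (R n) :=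
  { (inferInstance : AddCommGroup (R n)) with
    mul := (· * ·)
    one := 1
    mul_assoc := mul_assoc'
    one_mul := one_mul'
    mul_one := mul_one'
    left_distrib := left_distrib'
    right_distrib := right_distrib'
    zero_mul := zero_mul'
    mul_zero := mul_zero' }

theorem add_apply (f g : R n) (l : ND n) : (f + g) l = f l + g l := rfl
theorem zero_apply (l : ND n) : (0 : R n) l = 0 := rfl
theorem neg_apply (f : R n) (l : ND n) : (-f) l = -(f l) := rfl
theorem zsmul_apply (m : ℤ) (f : R n) (l : ND n) : (m • f) l = m * f l := rfl

/-- The monomial `X_m` as an element of the reduced algebra. -/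
def dl (m : List (Fin n)) : R n := fun l => if l.1 = m then 1 else 0

theorem dl_apply (m : List (Fin n)) (l : ND n) : dl m l = if l.1 = m then 1 else 0 := rfl

theorem dl_mul_dl (p q : List (Fin n)) : (dl p) * (dl q) = dl (p ++ q) := by
  funext l
  obtain ⟨l, hl⟩ := l
  rw [R.mul_def]
  by_cases hpq : l = p ++ q
  · subst hpq
    rw [show dl (p ++ q) ⟨p ++ q, hl⟩ = 1 from if_pos rfl]
    rw [Finset.sum_eq_single p.length]
    · rw [show dl p ⟨(p++q).take p.length, _⟩ = 1 from if_pos List.take_left,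
        show dl q ⟨(p++q).drop p.length, _⟩ = 1 from if_pos List.drop_left]
      norm_num
    · intro k hk hk0
      rw [Finset.mem_range] at hk
      by_cases h1 : (p++q).take k = p
      · exfalso
        apply hk0
        have := congrArg List.length h1
        rw [List.length_take] at this
        omega
      · rw [show dl p ⟨(p++q).take k, _⟩ = 0 from if_neg h1, zero_mul]
    · intro h
      exact (h (Finset.mem_range.mpr (by rw [List.length_append]; omega))).elim
  · rw [show dl (p ++ q) ⟨l, hl⟩ = 0 from if_neg hpq]
    refine Finset.sum_eq_zero fun k hk => ?_
    by_cases h1 : l.take k = p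
    · by_cases h2 : l.drop k = q
      · exfalso; apply hpq; rw [← h1, ← h2, List.take_append_drop]
      · rw [show dl q ⟨l.drop k, _⟩ = 0 from if_neg h2, mul_zero]
    · rw [show dl p ⟨l.take k, _⟩ = 0 from if_neg h1, zero_mul]

theorem dl_nil : (dl [] : R n) = 1 := rfl

/-- `f` vanishes on monomials not containing the variable `j`. -/
def VanOff (j : Fin n) (f : R n) : Prop := ∀ l : ND n, j ∉ l.1 → f l = 0

theorem vanOff_dl_single (j : Fin n) : VanOff j (dl [j]) := by
  intro l hj
  rw [dl_apply, if_neg]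
  intro h
  exact hj (by rw [h]; exact List.mem_singleton_self j)

theorem VanOff.add {j : Fin n} {f g : R n} (hf : VanOff j f) (hg : VanOff j g) :
    VanOff j (f + g) := fun l hl => by rw [R.add_apply, hf l hl, hg l hl, add_zero]

theorem VanOff.zsmul {j : Fin n} {f : R n} (hf : VanOff j f) (m : ℤ) :
    VanOff j (m • f) := fun l hl => by rw [R.zsmul_apply, hf l hl, mul_zero]

theorem VanOff.mul_left {j : Fin n} {f : R n} (hf : VanOff j f) (g : R n) :
    VanOff j (g * f) := by
  intro l hl
  obtain ⟨l, hnd⟩ := l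
  rw [R.mul_def]
  refine Finset.sum_eq_zero fun k hk => ?_
  rw [hf ⟨l.drop k, _⟩ (fun hm => hl ((List.drop_sublist k l).mem hm)), mul_zero]

theorem VanOff.mul_right {j : Fin n} {f : R n} (hf : VanOff j f) (g : R n) :
    VanOff j (f * g) := by
  intro l hl
  obtain ⟨l, hnd⟩ := l
  rw [R.mul_def]
  refine Finset.sum_eq_zero fun k hk => ?_
  rw [hf ⟨l.take k, _⟩ (fun hm => hl ((List.take_sublist k l).mem hm)), zero_mul]

/-- Key nilpotence: the product of two series both supported on `j`-containing monomials
vanishes identically in the reduced algebra. -/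
theorem VanOff.mul_eq_zero {j : Fin n} {f g : R n} (hf : VanOff j f) (hg : VanOff j g) :
    f * g = 0 := by
  funext l
  obtain ⟨l, hnd⟩ := l
  rw [R.mul_def, R.zero_apply]
  refine Finset.sum_eq_zero fun k hk => ?_
  by_cases hjt : j ∈ l.take k
  · have hjd : j ∉ l.drop k := by
      intro hjd
      have h2 := hnd
      rw [← List.take_append_drop k l, List.nodup_append] at h2
      exact h2.2.2 j hjt j hjd rfl
    rw [hg ⟨l.drop k, _⟩ hjd, mul_zero]
  · rw [hf ⟨l.take k, _⟩ hjt, zero_mul]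

def killFun (j : Fin n) (f : R n) : R n := fun l => if j ∈ l.1 then 0 else f l

theorem killFun_apply (j : Fin n) (f : R n) (l : ND n) :
    killFun j f l = if j ∈ l.1 then 0 else f l := rfl

theorem killFun_one (j : Fin n) : killFun j (1 : R n) = 1 := by
  funext l
  obtain ⟨l, hl⟩ := l
  rw [killFun_apply]
  by_cases hj : j ∈ l
  · have hne : l ≠ [] := by rintro rfl; simp at hj
    rw [if_pos hj, R.one_def, if_neg hne]
  · rw [if_neg hj]

theorem killFun_mul (j : Fin n) (f g : R n) :
    killFun j (f * g) = killFun j f * killFun j g := by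
  funext l
  obtain ⟨l, hl⟩ := l
  rw [killFun_apply]
  by_cases hj : j ∈ l
  · rw [if_pos hj]
    rw [R.mul_def]
    symm
    refine Finset.sum_eq_zero fun k hk => ?_
    rcases List.mem_append.mp (by rw [List.take_append_drop]; exact hj :
        j ∈ l.take k ++ l.drop k) with h | h
    · rw [killFun_apply, if_pos h, zero_mul]
    · rw [killFun_apply j g, if_pos h, mul_zero]
  · rw [if_neg hj]
    rw [R.mul_def, R.mul_def]
    refine Finset.sum_congr rfl fun k hk => ?_
    have h1 : j ∉ l.take k := fun hm => hj ((List.take_sublist k l).mem hm)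
    have h2 : j ∉ l.drop k := fun hm => hj ((List.drop_sublist k l).mem hm)
    rw [killFun_apply, killFun_apply, if_neg h1, if_neg h2]

theorem killFun_add (j : Fin n) (f g : R n) :
    killFun j (f + g) = killFun j f + killFun j g := by
  funext l
  rw [R.add_apply, killFun_apply, killFun_apply, killFun_apply]
  by_cases hj : j ∈ l.1
  · rw [if_pos hj, if_pos hj, if_pos hj]; norm_num
  · rw [if_neg hj, if_neg hj, if_neg hj, R.add_apply]

/-- The ring endomorphism of `R n` killing all monomials containing `j`. -/
def kill (j : Fin n) : R n →+* R n where
  toFun := killFun j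
  map_one' := killFun_one j
  map_mul' := killFun_mul j
  map_zero' := by
    funext l
    show killFun j 0 l = (0 : R n) l
    rw [killFun_apply, R.zero_apply, ite_self]
  map_add' := killFun_add j

theorem kill_apply (j : Fin n) (f : R n) (l : ND n) :
    kill j f l = if j ∈ l.1 then 0 else f l := rfl

/-- The unit `1 + X_v` of the reduced algebra. -/
def uX (v : Fin n) : (R n)ˣ where
  val := 1 + dl [v]
  inv := 1 - dl [v]
  val_inv := by
    have h : dl [v] * dl [v] = (0 : R n) := by
      rw [dl_mul_dl]
      funext l
      rw [dl_apply, if_neg, R.zero_apply]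
      intro h
      have := l.2
      rw [h] at this
      simp at this
    have h2 : (1 + dl [v]) * (1 - dl [v]) = 1 - dl [v] * dl [v] := by noncomm_ring
    rw [h2, h, sub_zero]
  inv_val := by
    have h : dl [v] * dl [v] = (0 : R n) := by
      rw [dl_mul_dl]
      funext l
      rw [dl_apply, if_neg, R.zero_apply]
      intro h
      have := l.2
      rw [h] at this
      simp at this
    have h2 : (1 - dl [v]) * (1 + dl [v]) = 1 - dl [v] * dl [v] := by noncomm_ring
    rw [h2, h, sub_zero]

/-- The reduced Magnus expansion homomorphism. -/
def phi : FreeGroup (Fin n) →* (R n)ˣ := FreeGroup.lift (fun v => uX v)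

theorem phi_of (v : Fin n) : phi (FreeGroup.of v) = uX v := FreeGroup.lift_apply_of

theorem phi_single_val (v : Fin n) (b : Bool) (m : List (Fin n)) (hm : m.Nodup) :
    (phi (FreeGroup.mk [(v,b)])).val ⟨m, hm⟩ = genCoeff v b m := by
  cases b
  · -- inverse letter
    have h1 : FreeGroup.mk [(v,false)] = (FreeGroup.of v)⁻¹ := by
      rw [show FreeGroup.of v = FreeGroup.mk [(v,true)] from rfl, FreeGroup.inv_mk]; rfl
    rw [h1, map_inv, phi_of]
    have h2 : (((uX v)⁻¹ : (R n)ˣ) : R n) = 1 - dl [v] := rfl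
    rw [h2]
    show (1 : R n) ⟨m, hm⟩ - dl [v] ⟨m, hm⟩ = genCoeff v false m
    rw [R.one_def, dl_apply]
    unfold genCoeff
    match m, hm with
    | [], _ => simp
    | [a], _ =>
      by_cases hav : a = v
      · subst hav; simp
      · simp [hav, Ne.symm hav]
    | (a :: c :: t), hm =>
      have hne1 : (a :: c :: t) ≠ [] := by simp
      have hne2 : (a :: c :: t) ≠ [v] := by simp
      have hav : ¬((a :: c :: t).all (· = v) = true) := by
        rw [List.all_eq_true]
        intro hall
        have ha : a = v := by simpa using hall a (by simp)
        have hc : c = v := by simpa using hall c (by simp)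
        rw [List.nodup_cons] at hm
        exact hm.1 (by rw [ha, ← hc]; exact List.mem_cons_self)
      simp [hne1, hne2, hav]
  · -- positive letter
    rw [show FreeGroup.mk [(v,true)] = FreeGroup.of v from rfl, phi_of]
    show (1 : R n) ⟨m, hm⟩ + dl [v] ⟨m, hm⟩ = genCoeff v true m
    rw [R.one_def, dl_apply]
    unfold genCoeff
    by_cases h1 : m = []
    · subst h1; simp
    · by_cases h2 : m = [v]
      · subst h2; simp
      · simp [h1, h2]

theorem phi_mk_val (w : List (Fin n × Bool)) (l : List (Fin n)) (hl : l.Nodup) :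
    (phi (FreeGroup.mk w)).val ⟨l, hl⟩ = wordCoeff w l := by
  induction w generalizing l hl with
  | nil =>
    rw [← FreeGroup.one_eq_mk, map_one]
    show (1 : R n) ⟨l, hl⟩ = _
    rw [R.one_def]
    rfl
  | cons p w' ih =>
    obtain ⟨v, b⟩ := p
    have h1 : FreeGroup.mk ((v,b) :: w') = FreeGroup.mk [(v,b)] * FreeGroup.mk w' := by
      rw [FreeGroup.mul_mk]; rfl
    rw [h1, map_mul, Units.val_mul, R.mul_def]
    show _ = conv (genCoeff v b) (wordCoeff w') l
    unfold conv
    refine Finset.sum_congr rfl fun k hk => ?_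
    rw [phi_single_val, ih]

theorem magnus_eq (g : FreeGroup (Fin n)) (l : List (Fin n)) (hl : l.Nodup) :
    magnus g l = (phi g).val ⟨l, hl⟩ := by
  conv_rhs => rw [← FreeGroup.mk_toWord (x := g)]
  rw [phi_mk_val]
  rfl

/-- The normal closure of the reduction relators. -/
abbrev KK (n : ℕ) : Subgroup (FreeGroup (Fin n)) := Subgroup.normalClosure (redRelators n)

/-- Augmentation: evaluation at the empty monomial. -/
def eps : R n →+* ℤ where
  toFun f := f ⟨[], List.nodup_nil⟩
  map_one' := rfl
  map_mul' f g := by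
    show (f * g) ⟨[], List.nodup_nil⟩ = _
    rw [R.mul_def]
    show ∑ k ∈ Finset.range 1, _ = _
    rw [Finset.sum_range_one]
    rfl
  map_zero' := rfl
  map_add' f g := rfl

theorem phi_val_nil (g : FreeGroup (Fin n)) : (phi g).val ⟨[], List.nodup_nil⟩ = 1 := by
  have key : (Units.map (eps (n := n)).toMonoidHom).comp phi = 1 := by
    refine FreeGroup.ext_hom _ _ fun v => ?_
    rw [MonoidHom.comp_apply, phi_of, MonoidHom.one_apply]
    refine Units.ext ?_
    rw [Units.coe_map, Units.val_one]
    show (1 + dl [v]) ⟨[], List.nodup_nil⟩ = 1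
    rw [R.add_apply, R.one_def, dl_apply]
    simp
  have h2 := congrArg Units.val (DFunLike.congr_fun key g)
  exact h2

theorem phi_inv_nil (g : FreeGroup (Fin n)) : (phi g).inv ⟨[], List.nodup_nil⟩ = 1 := by
  have : (phi g).inv = ((phi g)⁻¹).val := rfl
  rw [this, ← map_inv]
  exact phi_val_nil g⁻¹

theorem commute_uX_conj (i : Fin n) (u : (R n)ˣ) : Commute (uX i) (u⁻¹ * uX i * u) := by
  have hval : ((u⁻¹ * uX i * u : (R n)ˣ) : R n) = 1 + u.inv * dl [i] * u.val := by
    show u.inv * (1 + dl [i]) * u.val = _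
    have : u.inv * (1 + dl [i]) * u.val = u.inv * u.val + u.inv * dl [i] * u.val := by
      noncomm_ring
    rw [this, u.inv_val]
  set B := u.inv * dl [i] * u.val with hB
  have hvB : VanOff i B := ((vanOff_dl_single i).mul_left u.inv).mul_right u.val
  have hvX : VanOff i (dl [i]) := vanOff_dl_single i
  refine Units.ext ?_
  rw [Units.val_mul (uX i) (u⁻¹ * uX i * u), Units.val_mul (u⁻¹ * uX i * u) (uX i), hval]
  show (1 + dl [i]) * (1 + B) = (1 + B) * (1 + dl [i])
  have e1 : (1 + dl [i]) * (1 + B) = 1 + dl [i] + B + dl [i] * B := by noncomm_ring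
  have e2 : (1 + B) * (1 + dl [i]) = 1 + dl [i] + B + B * dl [i] := by noncomm_ring
  rw [e1, e2, hvX.mul_eq_zero hvB, hvB.mul_eq_zero hvX]

theorem phi_relator {r : FreeGroup (Fin n)} (hr : r ∈ redRelators n) : phi r = 1 := by
  obtain ⟨i, w, rfl⟩ := hr
  have hc : Commute ((uX i)⁻¹) (((phi w)⁻¹ * uX i * phi w)⁻¹) := by
    exact ((commute_uX_conj i (phi w)).inv_left).inv_right
  have := commutatorElement_eq_one_iff_commute.mpr hc
  rw [commutatorElement_def] at this
  simp only [map_mul, map_inv, phi_of]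
  calc (uX i)⁻¹ * ((phi w)⁻¹ * uX i * phi w)⁻¹ * uX i * ((phi w)⁻¹ * uX i * phi w)
      = (uX i)⁻¹ * ((phi w)⁻¹ * uX i * phi w)⁻¹ * ((uX i)⁻¹)⁻¹ *
        (((phi w)⁻¹ * uX i * phi w)⁻¹)⁻¹ := by rw [inv_inv, inv_inv]
    _ = 1 := this

theorem phi_K {g : FreeGroup (Fin n)} (hg : g ∈ KK n) : phi g = 1 := by
  have hle : KK n ≤ (phi (n := n)).ker := by
    have : (redRelators n) ⊆ (phi (n := n)).ker := fun r hr => phi_relator hr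
    exact Subgroup.normalClosure_le_normal this
  exact hle hg

theorem dl_single_mul_apply (a : Fin n) (f : R n) (l : List (Fin n)) (h : (a::l).Nodup) :
    (dl [a] * f) ⟨a::l, h⟩ = f ⟨l, (List.nodup_cons.mp h).2⟩ := by
  rw [R.mul_def]
  rw [Finset.sum_eq_single 1]
  · rw [show dl [a] ⟨(a::l).take 1, _⟩ = 1 from if_pos rfl, one_mul]
    rfl
  · intro k hk hk1
    rw [Finset.mem_range] at hk
    rw [show dl [a] ⟨(a::l).take k, _⟩ = 0 from ?_, zero_mul]
    rw [dl_apply, if_neg]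
    intro hc
    have hlen := congrArg List.length hc
    rw [List.length_take] at hlen
    simp only [List.length_cons, List.length_singleton, List.length_nil] at hlen
    rcases Nat.le_total k (l.length + 1) with h' | h'
    · rw [min_eq_left h'] at hlen
      exact hk1 hlen
    · rw [min_eq_right h'] at hlen
      simp only [List.length_cons] at hk
      omega
  · intro hc
    exact (hc (Finset.mem_range.mpr (by simp))).elim

theorem forward_dir {i : Fin n} {g : FreeGroup (Fin n)}
    (h : (FreeGroup.of i)⁻¹ * g⁻¹ * FreeGroup.of i * g ∈ KK n) :
    ∀ l : List (Fin n), l ≠ [] → l.Nodup → magnus g l ≠ 0 → i ∈ l := by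
  intro l hne hnd hmag
  by_contra hi
  apply hmag
  have h1 := phi_K h
  simp only [map_mul, map_inv, phi_of] at h1
  have hc : Commute ((uX i)⁻¹) ((phi g)⁻¹) := by
    rw [← commutatorElement_eq_one_iff_commute, commutatorElement_def, inv_inv, inv_inv]
    calc (uX i)⁻¹ * (phi g)⁻¹ * uX i * phi g = _ := rfl
    _ = 1 := h1
  have hc2 : Commute (uX i) (phi g) := by
    have := hc.inv_left.inv_right
    rwa [inv_inv, inv_inv] at this
  -- value-level: X_i * c = c * X_i
  have hval : dl [i] * (phi g).val = (phi g).val * dl [i] := by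
    have := congrArg Units.val hc2.eq
    rw [Units.val_mul, Units.val_mul] at this
    have e1 : ((uX i).val) * (phi g).val = (phi g).val + dl [i] * (phi g).val := by
      show (1 + dl [i]) * (phi g).val = _
      rw [add_mul, one_mul]
    have e2 : (phi g).val * ((uX i).val) = (phi g).val + (phi g).val * dl [i] := by
      show (phi g).val * (1 + dl [i]) = _
      rw [mul_add, mul_one]
    rw [e1, e2] at this
    exact add_left_cancel this
  have hnd2 : (i :: l).Nodup := List.nodup_cons.mpr ⟨hi, hnd⟩
  have happ := congrFun hval ⟨i :: l, hnd2⟩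
  -- LHS = (phi g).val ⟨l, hnd⟩
  rw [dl_single_mul_apply i (phi g).val l hnd2] at happ
  -- RHS = 0
  have hr0 : ((phi g).val * dl [i]) ⟨i :: l, hnd2⟩ = 0 := by
    rw [R.mul_def]
    refine Finset.sum_eq_zero fun k hk => ?_
    rw [show dl [i] ⟨(i::l).drop k, _⟩ = 0 from ?_, mul_zero]
    rw [dl_apply, if_neg]
    intro hdrop
    match k, hdrop with
    | 0, hdrop => 
      have : l = [] := by simpa using hdrop
      exact hne this
    | (k'+1), hdrop =>
      have hd2 : l.drop k' = [i] := hdrop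
      have : i ∈ l.drop k' := by
        rw [hd2]
        exact List.mem_singleton_self i
      exact hi ((List.drop_sublist k' l).mem this)
  rw [hr0] at happ
  rw [magnus_eq g l hnd, happ]

/-! ### Group-theoretic side -/

open scoped commutatorElement in
theorem comm_of_comm_word {M : Type*} [Group M] {a b : M} (h : a⁻¹ * b⁻¹ * a * b = 1) :
    Commute a b := by
  have h1 : ⁅a⁻¹, b⁻¹⁆ = 1 := by
    rw [commutatorElement_def, inv_inv, inv_inv]
    exact h
  have h2 := commutatorElement_eq_one_iff_commute.mp h1
  have h3 := h2.inv_left.inv_right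
  rwa [inv_inv, inv_inv] at h3

/-- The quotient (the reduced free group, internally). -/
abbrev GG (n : ℕ) := FreeGroup (Fin n) ⧸ KK n

def piQ : FreeGroup (Fin n) →* GG n := QuotientGroup.mk' (KK n)

theorem piQ_surjective : Function.Surjective (piQ (n := n)) :=
  QuotientGroup.mk'_surjective _

theorem piQ_eq_one_iff (g : FreeGroup (Fin n)) : piQ g = 1 ↔ g ∈ KK n :=
  QuotientGroup.eq_one_iff g

theorem comm_conj (k : Fin n) (g h : FreeGroup (Fin n)) :
    Commute ((piQ g)⁻¹ * piQ (FreeGroup.of k) * piQ g)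
      ((piQ h)⁻¹ * piQ (FreeGroup.of k) * piQ h) := by
  have base : ∀ w : FreeGroup (Fin n),
      Commute (piQ (FreeGroup.of k)) ((piQ w)⁻¹ * piQ (FreeGroup.of k) * piQ w) := by
    intro w
    have hrel : (FreeGroup.of k)⁻¹ * (w⁻¹ * FreeGroup.of k * w)⁻¹ *
        FreeGroup.of k * (w⁻¹ * FreeGroup.of k * w) ∈ KK n :=
      Subgroup.subset_normalClosure ⟨k, w, rfl⟩
    have h1 : piQ ((FreeGroup.of k)⁻¹ * (w⁻¹ * FreeGroup.of k * w)⁻¹ *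
        FreeGroup.of k * (w⁻¹ * FreeGroup.of k * w)) = 1 := (piQ_eq_one_iff _).mpr hrel
    have h2 : (piQ (FreeGroup.of k))⁻¹ * ((piQ w)⁻¹ * piQ (FreeGroup.of k) * piQ w)⁻¹ *
        piQ (FreeGroup.of k) * ((piQ w)⁻¹ * piQ (FreeGroup.of k) * piQ w) = 1 := by
      rw [← h1]
      simp only [map_mul, map_inv]
    exact comm_of_comm_word h2
  have hbase := (base (h * g⁻¹)).eq
  set c := piQ (n := n) g with hc
  have key : Commute (c⁻¹ * piQ (FreeGroup.of k) * c)
      (c⁻¹ * ((piQ (h * g⁻¹))⁻¹ * piQ (FreeGroup.of k) * piQ (h * g⁻¹)) * c) := by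
    unfold Commute SemiconjBy
    calc (c⁻¹ * piQ (FreeGroup.of k) * c) *
          (c⁻¹ * ((piQ (h * g⁻¹))⁻¹ * piQ (FreeGroup.of k) * piQ (h * g⁻¹)) * c)
        = c⁻¹ * (piQ (FreeGroup.of k) *
            ((piQ (h * g⁻¹))⁻¹ * piQ (FreeGroup.of k) * piQ (h * g⁻¹))) * c := by group
      _ = c⁻¹ * (((piQ (h * g⁻¹))⁻¹ * piQ (FreeGroup.of k) * piQ (h * g⁻¹)) *
            piQ (FreeGroup.of k)) * c := by rw [hbase]
      _ = (c⁻¹ * ((piQ (h * g⁻¹))⁻¹ * piQ (FreeGroup.of k) * piQ (h * g⁻¹)) * c) *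
          (c⁻¹ * piQ (FreeGroup.of k) * c) := by group
  have e2 : c⁻¹ * ((piQ (h * g⁻¹))⁻¹ * piQ (FreeGroup.of k) * piQ (h * g⁻¹)) * c =
      (piQ h)⁻¹ * piQ (FreeGroup.of k) * piQ h := by
    rw [hc, map_mul, map_inv]
    group
  rw [e2] at key
  exact key

/-- The normal closure of (the image of) a single generator in the quotient. -/
def HH (j : Fin n) : Subgroup (GG n) := Subgroup.normalClosure {piQ (FreeGroup.of j)}

theorem HH_comm (j : Fin n) : ∀ p ∈ HH j, ∀ q ∈ HH j, Commute p q := by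
  have hbase : ∀ a ∈ Group.conjugatesOfSet {piQ (n := n) (FreeGroup.of j)},
      ∀ b ∈ Group.conjugatesOfSet {piQ (FreeGroup.of j)}, Commute a b := by
    intro a ha b hb
    rw [Group.mem_conjugatesOfSet_iff] at ha hb
    obtain ⟨a', ha', hca⟩ := ha
    obtain ⟨b', hb', hcb⟩ := hb
    rw [Set.mem_singleton_iff] at ha' hb'
    subst ha'; subst hb'
    rw [isConj_iff] at hca hcb
    obtain ⟨ca, hsa⟩ := hca
    obtain ⟨cb, hsb⟩ := hcb
    obtain ⟨ua, hua⟩ := piQ_surjective ca⁻¹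
    obtain ⟨ub, hub⟩ := piQ_surjective cb⁻¹
    have hA : a = (piQ ua)⁻¹ * piQ (FreeGroup.of j) * piQ ua := by
      rw [← hsa, hua]; group
    have hB : b = (piQ ub)⁻¹ * piQ (FreeGroup.of j) * piQ ub := by
      rw [← hsb, hub]; group
    rw [hA, hB]
    exact comm_conj j ua ub
  intro p hp q hq
  exact Subgroup.closure_induction₂ (p := fun x y _ _ => Commute x y)
    (fun x y hx hy => hbase x hx y hy)
    (fun x hx => Commute.one_left x) (fun x hx => Commute.one_right x)
    (fun x y z _ _ _ h1 h2 => h1.mul_left h2)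
    (fun y z x _ _ _ h1 h2 => h1.mul_right h2)
    (fun x y _ _ h => h.inv_left) (fun x y _ _ h => h.inv_right) hp hq

instance HH_isCommutative (j : Fin n) : IsMulCommutative (HH j) :=
  ⟨⟨fun a b => Subtype.ext ((HH_comm j a a.2 b b.2).eq)⟩⟩

/-- The key group identity: the image under `ψ` of a defining relation
`a(x_v-1)u(x_v-1)b` of the reduced algebra is trivial, given that conjugates
of `x` commute and conjugates of `z` commute. -/
theorem gen_identity {Γ : Type*} [Group Γ] (x z A U B : Γ)
    (hx : ∀ g h : Γ, Commute (g⁻¹*x*g) (h⁻¹*x*h))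
    (hz : ∀ g h : Γ, Commute (g⁻¹*z*g) (h⁻¹*z*h)) :
    ((A*z*U*z*B)⁻¹*x*(A*z*U*z*B)) * ((A*z*U*B)⁻¹*x*(A*z*U*B))⁻¹ *
      ((A*U*z*B)⁻¹*x*(A*U*z*B))⁻¹ * ((A*U*B)⁻¹*x*(A*U*B)) = 1 := by
  set y := A⁻¹*x*A with hy
  set r := U*z*U⁻¹ with hr
  have hzz : Commute z r := by
    have h0 := hz 1 U⁻¹
    have e : (U⁻¹)⁻¹*z*U⁻¹ = r := by rw [hr]; group
    rw [show (1:Γ)⁻¹*z*1 = z by group, e] at h0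
    exact h0
  have hzyr : Commute z (y*r*y⁻¹) := by
    have h0 := hz 1 (U⁻¹*y⁻¹)
    have e : (U⁻¹*y⁻¹)⁻¹*z*(U⁻¹*y⁻¹) = y*r*y⁻¹ := by rw [hr]; group
    rw [show (1:Γ)⁻¹*z*1 = z by group, e] at h0
    exact h0
  set w := z⁻¹*y*z with hw
  set d := r⁻¹*y*r with hd
  have hdy : Commute d y := by
    have h0 := hx (A*r) A
    have e1 : (A*r)⁻¹*x*(A*r) = d := by rw [hd, hy]; group
    have e2 : A⁻¹*x*A = y := rfl
    rw [e1, e2] at h0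
    exact h0
  have step1 : w*r*w⁻¹ = y*r*y⁻¹ := by
    have h1 : z*r*z⁻¹ = r := by
      have := hzz.eq
      rw [show z*r*z⁻¹ = (z*r)*z⁻¹ from rfl, this]
      group
    calc w*r*w⁻¹ = z⁻¹*(y*(z*r*z⁻¹)*y⁻¹)*z := by rw [hw]; group
      _ = z⁻¹*(y*r*y⁻¹)*z := by rw [h1]
      _ = y*r*y⁻¹ := by
          have h2 := (hzyr.inv_left).eq
          rw [show z⁻¹*(y*r*y⁻¹)*z = (z⁻¹*(y*r*y⁻¹))*z from rfl, h2]
          group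
  have main : ((z*r)⁻¹*y*(z*r)) * (z⁻¹*y*z)⁻¹ * (r⁻¹*y*r)⁻¹ * y = 1 := by
    calc ((z*r)⁻¹*y*(z*r)) * (z⁻¹*y*z)⁻¹ * (r⁻¹*y*r)⁻¹ * y
        = r⁻¹*(w*r*w⁻¹)*(r⁻¹*y⁻¹*r)*y := by rw [hw]; group
      _ = r⁻¹*(y*r*y⁻¹)*(r⁻¹*y⁻¹*r)*y := by rw [step1]
      _ = d*y⁻¹*d⁻¹*y := by rw [hd]; group
      _ = 1 := by
          have h3 := (hdy.inv_left).eq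
          calc d*y⁻¹*d⁻¹*y = d*y⁻¹*(d⁻¹*y) := by group
            _ = d*y⁻¹*(y*d⁻¹) := by rw [h3]
            _ = 1 := by group
  have goalEq : ((A*z*U*z*B)⁻¹*x*(A*z*U*z*B)) * ((A*z*U*B)⁻¹*x*(A*z*U*B))⁻¹ *
      ((A*U*z*B)⁻¹*x*(A*U*z*B))⁻¹ * ((A*U*B)⁻¹*x*(A*U*B))
      = (U*B)⁻¹ * (((z*r)⁻¹*y*(z*r)) * (z⁻¹*y*z)⁻¹ * (r⁻¹*y*r)⁻¹ * y) * (U*B) := by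
    rw [hy, hr]; group
  rw [goalEq, main, mul_one, inv_mul_cancel]

/-! ### The maps killing one generator -/

def iota (j : Fin n) : FreeGroup {v : Fin n // v ≠ j} →* FreeGroup (Fin n) :=
  FreeGroup.lift (fun v => FreeGroup.of v.1)

def kap' (j : Fin n) : FreeGroup (Fin n) →* FreeGroup {v : Fin n // v ≠ j} :=
  FreeGroup.lift (fun y => if h : y = j then 1 else FreeGroup.of ⟨y, h⟩)

def kap (j : Fin n) : FreeGroup (Fin n) →* FreeGroup (Fin n) := (iota j).comp (kap' j)

theorem iota_of (j : Fin n) (v : {v : Fin n // v ≠ j}) :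
    iota j (FreeGroup.of v) = FreeGroup.of v.1 := FreeGroup.lift_apply_of

theorem kap_of_self (j : Fin n) : kap j (FreeGroup.of j) = 1 := by
  unfold kap kap'
  rw [MonoidHom.comp_apply, FreeGroup.lift_apply_of, dif_pos rfl, map_one]

theorem kap_of_ne {j y : Fin n} (h : y ≠ j) : kap j (FreeGroup.of y) = FreeGroup.of y := by
  unfold kap kap'
  rw [MonoidHom.comp_apply, FreeGroup.lift_apply_of, dif_neg h, iota_of]

/-- Every element is congruent to its `j`-erasure modulo the normal closure of `x_j`. -/
theorem mem_ncl_kap (j : Fin n) (g : FreeGroup (Fin n)) :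
    g * (kap j g)⁻¹ ∈ Subgroup.normalClosure ({FreeGroup.of j} : Set (FreeGroup (Fin n))) := by
  set N := Subgroup.normalClosure ({FreeGroup.of j} : Set (FreeGroup (Fin n))) with hN
  refine FreeGroup.induction_on (C := fun z => z * (kap j z)⁻¹ ∈ N) g ?_ ?_ ?_ ?_
  · show (1 : FreeGroup (Fin n)) * (kap j 1)⁻¹ ∈ N
    rw [map_one, inv_one, mul_one]
    exact one_mem N
  · intro y
    show FreeGroup.of y * (kap j (FreeGroup.of y))⁻¹ ∈ N
    by_cases h : y = j
    · subst h
      rw [kap_of_self, inv_one, mul_one]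
      exact Subgroup.subset_normalClosure rfl
    · rw [kap_of_ne h, mul_inv_cancel]
      exact one_mem N
  · intro y hy
    show (FreeGroup.of y)⁻¹ * (kap j (FreeGroup.of y)⁻¹)⁻¹ ∈ N
    have hz : FreeGroup.of y * (kap j (FreeGroup.of y))⁻¹ ∈ N := hy
    set z : FreeGroup (Fin n) := FreeGroup.of y
    set m := z * (kap j z)⁻¹ with hm
    have key : z⁻¹ * (kap j z⁻¹)⁻¹ = z⁻¹ * m⁻¹ * z := by
      rw [hm, map_inv]; group
    rw [key]
    have := (Subgroup.normalClosure_normal (s := ({FreeGroup.of j} : Set (FreeGroup (Fin n))))).conj_mem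
      m⁻¹ (inv_mem hz) z⁻¹
    simpa using this
  · intro a b ha hb
    show (a * b) * (kap j (a * b))⁻¹ ∈ N
    have key : (a * b) * (kap j (a * b))⁻¹ =
        (a * (b * (kap j b)⁻¹) * a⁻¹) * (a * (kap j a)⁻¹) := by
      rw [map_mul]; group
    rw [key]
    refine mul_mem ?_ ha
    have := (Subgroup.normalClosure_normal (s := ({FreeGroup.of j} : Set (FreeGroup (Fin n))))).conj_mem
      _ hb a
    simpa using this

theorem piQ_mem_HH_of_ncl {j : Fin n} {g : FreeGroup (Fin n)}
    (hg : g ∈ Subgroup.normalClosure ({FreeGroup.of j} : Set (FreeGroup (Fin n)))) :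
    piQ g ∈ HH j := by
  have hmap : Subgroup.map piQ (Subgroup.normalClosure ({FreeGroup.of j} : Set (FreeGroup (Fin n)))) =
      Subgroup.normalClosure {piQ (FreeGroup.of j)} := by
    rw [Subgroup.map_normalClosure _ _ piQ_surjective, Set.image_singleton]
  have : piQ g ∈ Subgroup.map piQ (Subgroup.normalClosure ({FreeGroup.of j} : Set (FreeGroup (Fin n)))) :=
    ⟨g, hg, rfl⟩
  rwa [hmap] at this

/-- Stripping: the conjugate of `x_j` by `g` only depends on the `j`-erasure of `g`. -/
theorem strip (j : Fin n) (g : FreeGroup (Fin n)) :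
    (piQ g)⁻¹ * piQ (FreeGroup.of j) * piQ g =
      (piQ (kap j g))⁻¹ * piQ (FreeGroup.of j) * piQ (kap j g) := by
  have hmem : piQ (g * (kap j g)⁻¹) ∈ HH j := piQ_mem_HH_of_ncl (mem_ncl_kap j g)
  set ν := piQ (g * (kap j g)⁻¹) with hν
  have hx : piQ (n := n) (FreeGroup.of j) ∈ HH j := Subgroup.subset_normalClosure rfl
  have hcomm := HH_comm j _ hmem _ hx
  have hg : piQ g = ν * piQ (kap j g) := by
    rw [hν, map_mul, map_inv]
    group
  rw [hg]
  have hfix : ν⁻¹ * piQ (FreeGroup.of j) * ν = piQ (FreeGroup.of j) := by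
    have h2 := hcomm.eq
    calc ν⁻¹ * piQ (FreeGroup.of j) * ν = ν⁻¹ * (piQ (FreeGroup.of j) * ν) := by group
      _ = ν⁻¹ * (ν * piQ (FreeGroup.of j)) := by rw [h2]
      _ = piQ (FreeGroup.of j) := by group
  calc (ν * piQ (kap j g))⁻¹ * piQ (FreeGroup.of j) * (ν * piQ (kap j g))
      = (piQ (kap j g))⁻¹ * (ν⁻¹ * piQ (FreeGroup.of j) * ν) * piQ (kap j g) := by group
    _ = (piQ (kap j g))⁻¹ * piQ (FreeGroup.of j) * piQ (kap j g) := by rw [hfix]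

theorem liftAddHom_zsingle {α : Type*} {N : Type*} [AddCommGroup N] (f : α → N) (a : α) (m : ℤ) :
    Finsupp.liftAddHom (M := ℤ) (fun x => zmultiplesHom N (f x)) (Finsupp.single a m) = m • f a := by
  have h1 : Finsupp.liftAddHom (M := ℤ) (fun x => zmultiplesHom N (f x)) (Finsupp.single a m)
      = (Finsupp.single a m).sum (fun x b => (zmultiplesHom N (f x)) b) := rfl
  rw [h1, Finsupp.sum_single_index (by simp), zmultiplesHom_apply]

/-! ### The monoid-algebra machinery -/

theorem phi_ker_K : KK n ≤ (phi (n := n)).ker :=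
  Subgroup.normalClosure_le_normal (fun r hr => phi_relator hr)

def phiQ : GG n →* (R n)ˣ := QuotientGroup.lift (KK n) phi phi_ker_K

theorem phiQ_piQ (g : FreeGroup (Fin n)) : phiQ (piQ g) = phi g :=
  QuotientGroup.lift_mk' _ _ g

section MAlg

variable (j : Fin n)

abbrev MA (n : ℕ) (j : Fin n) := MonoidAlgebra ℤ (FreeGroup {v : Fin n // v ≠ j})

def aelt (w : FreeGroup {v : Fin n // v ≠ j}) : GG n :=
  (piQ (iota j w))⁻¹ * piQ (FreeGroup.of j) * piQ (iota j w)

theorem aelt_mem (w : FreeGroup {v : Fin n // v ≠ j}) : aelt j w ∈ HH j := by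
  have hx : piQ (n := n) (FreeGroup.of j) ∈ HH j := Subgroup.subset_normalClosure rfl
  have := (Subgroup.normalClosure_normal).conj_mem _ hx (piQ (iota j w))⁻¹
  simpa [aelt, mul_assoc, HH] using this

def aeltH (w : FreeGroup {v : Fin n // v ≠ j}) : HH j := ⟨aelt j w, aelt_mem j w⟩

noncomputable instance : CommGroup (HH j) := { (inferInstance : Group (HH j)) with mul_comm := fun a b => Subtype.ext ((HH_comm j a a.2 b b.2).eq) }

noncomputable def Psi : MA n j →+ Additive (HH j) :=
  (Finsupp.liftAddHom (fun w => (zmultiplesHom (Additive (HH j))) (Additive.ofMul (aeltH j w)))).comp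
    MonoidAlgebra.coeffAddEquiv.toAddMonoidHom

noncomputable def NN (α : MA n j) : GG n := ((Additive.toMul (Psi j α) : HH j) : GG n)

theorem NN_zero : NN j (0 : MA n j) = 1 := by
  unfold NN
  rw [map_zero]
  rfl

theorem NN_add (α β : MA n j) : NN j (α + β) = NN j α * NN j β := by
  unfold NN
  rw [map_add]
  rfl

theorem NN_single (w : FreeGroup {v : Fin n // v ≠ j}) (m : ℤ) :
    NN j (MonoidAlgebra.single w m) = (aelt j w) ^ m := by
  have hP : Psi j (MonoidAlgebra.single w m) = m • Additive.ofMul (aeltH j w) :=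
    liftAddHom_zsingle (fun w => Additive.ofMul (aeltH j w)) w m
  unfold NN
  rw [hP]
  have h2 : Additive.toMul (m • Additive.ofMul (aeltH j w)) = aeltH j w ^ m := rfl
  rw [h2, SubgroupClass.coe_zpow]
  rfl

def conjX (w : FreeGroup {v : Fin n // v ≠ j}) : R n :=
  (phi (iota j w)).inv * dl [j] * (phi (iota j w)).val

noncomputable def DD : MA n j →+ R n :=
  (Finsupp.liftAddHom (fun w => (zmultiplesHom (R n)) (conjX j w))).comp
    MonoidAlgebra.coeffAddEquiv.toAddMonoidHom

theorem DD_single (w : FreeGroup {v : Fin n // v ≠ j}) (m : ℤ) :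
    DD j (MonoidAlgebra.single w m) = m • conjX j w := by
  exact liftAddHom_zsingle (fun w => conjX j w) w m

noncomputable def Ehat : MA n j →ₐ[ℤ] R n :=
  MonoidAlgebra.lift ℤ _ _ ((Units.coeHom (R n)).comp (phi.comp (iota j)))

theorem Ehat_single (w : FreeGroup {v : Fin n // v ≠ j}) (m : ℤ) :
    Ehat j (MonoidAlgebra.single w m) = m • (phi (iota j w)).val := by
  unfold Ehat
  rw [show (MonoidAlgebra.single w m : MA n j) = MonoidAlgebra.single w m from rfl,
    MonoidAlgebra.lift_single]
  rfl

/-- Coefficient functions of words avoiding `j` are supported on `j`-free monomials. -/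
theorem kill_phi_iota (w : FreeGroup {v : Fin n // v ≠ j}) :
    Units.map (kill j).toMonoidHom (phi (iota j w)) = phi (iota j w) := by
  have key : (Units.map (kill j).toMonoidHom).comp (phi.comp (iota j)) = phi.comp (iota j) := by
    refine FreeGroup.ext_hom _ _ fun v => ?_
    show Units.map (kill j).toMonoidHom (phi (iota j (FreeGroup.of v))) = phi (iota j (FreeGroup.of v))
    rw [iota_of, phi_of]
    refine Units.ext ?_
    rw [Units.coe_map]
    show kill j ((1 + dl [v.1] : R n)) = 1 + dl [v.1]
    funext l
    rw [kill_apply]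
    by_cases hj : j ∈ l.1
    · rw [if_pos hj]
      have h1 : l.1 ≠ [] := by rintro h; rw [h] at hj; simp at hj
      have h2 : l.1 ≠ [v.1] := by
        rintro h; rw [h] at hj
        have : j = v.1 := by simpa using hj
        exact v.2 this.symm
      rw [R.add_apply, R.one_def, dl_apply, if_neg h1, if_neg h2]
      norm_num
    · rw [if_neg hj]
  exact DFunLike.congr_fun key w

theorem phi_iota_val_vanish (w : FreeGroup {v : Fin n // v ≠ j}) {l : ND n} (hj : j ∈ l.1) :
    (phi (iota j w)).val l = 0 := by
  have h1 := congrArg Units.val (kill_phi_iota j w)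
  rw [Units.coe_map] at h1
  have h2 := congrFun h1 l
  rw [show ((kill j).toMonoidHom ((phi (iota j w)).val) : R n) l
      = kill j ((phi (iota j w)).val) l from rfl, kill_apply, if_pos hj] at h2
  exact h2.symm

theorem phi_iota_inv_vanish (w : FreeGroup {v : Fin n // v ≠ j}) {l : ND n} (hj : j ∈ l.1) :
    (phi (iota j w)).inv l = 0 := by
  have h1 := congrArg Units.inv (kill_phi_iota j w)
  have h2 : kill j ((phi (iota j w)).inv) = (phi (iota j w)).inv := h1
  have h3 := congrFun h2 l
  rw [kill_apply, if_pos hj] at h3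
  exact h3.symm

theorem conjX_vanOff (w : FreeGroup {v : Fin n // v ≠ j}) : VanOff j (conjX j w) :=
  ((vanOff_dl_single j).mul_left _).mul_right _

theorem vanOff_zero (j' : Fin n) : VanOff j' (0 : R n) := fun _ _ => rfl

theorem DD_vanOff (α : MA n j) : VanOff j (DD j α) := by
  induction α using MonoidAlgebra.induction with
  | zero => rw [map_zero]; exact vanOff_zero j
  | single_add w m f hwf hm ih =>
    rw [map_add]
    refine VanOff.add ?_ ih
    rw [show (MonoidAlgebra.single w m : MA n j) = MonoidAlgebra.single w m from rfl, DD_single]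
    exact (conjX_vanOff j w).zsmul m

theorem dl_single_sq (v : Fin n) : dl [v] * dl [v] = (0 : R n) := by
  rw [dl_mul_dl]
  funext l
  rw [dl_apply, if_neg, R.zero_apply]
  intro h
  have := l.2
  rw [h] at this
  simp at this

theorem uX_zpow_val (m : ℤ) : (((uX j ^ m : (R n)ˣ)) : R n) = 1 + m • dl [j] := by
  induction m using Int.induction_on with
  | zero => rw [zpow_zero, Units.val_one, zero_smul, add_zero]
  | succ k ih =>
    rw [zpow_add_one, Units.val_mul, ih]
    show (1 + (k:ℤ) • dl [j]) * (1 + dl [j]) = _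
    rw [mul_add, mul_one, add_mul, one_mul, smul_mul_assoc, dl_single_sq, smul_zero, add_zero]
    rw [show ((k:ℤ)+1) • dl [j] = (k:ℤ) • dl [j] + dl [j] by rw [add_smul, one_smul]]
    abel
  | pred k ih =>
    rw [zpow_sub_one, Units.val_mul, ih]
    show (1 + (-(k:ℤ)) • dl [j]) * (1 - dl [j]) = _
    rw [mul_sub, mul_one, add_mul, one_mul, smul_mul_assoc, dl_single_sq, smul_zero, add_zero]
    rw [show (-(k:ℤ)-1) • dl [j] = (-(k:ℤ)) • dl [j] - dl [j] by rw [sub_smul, one_smul]]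
    abel

theorem phiQ_aelt (w : FreeGroup {v : Fin n // v ≠ j}) :
    phiQ (aelt j w) = (phi (iota j w))⁻¹ * uX j * phi (iota j w) := by
  unfold aelt
  rw [map_mul, map_mul, map_inv, phiQ_piQ, phiQ_piQ, phi_of]

theorem phiQ_NN_single_val (w : FreeGroup {v : Fin n // v ≠ j}) (m : ℤ) :
    ((phiQ (NN j (MonoidAlgebra.single w m)) : (R n)ˣ) : R n) = 1 + m • conjX j w := by
  rw [NN_single, map_zpow, phiQ_aelt]
  set c := phi (iota j w) with hc
  have h1 : (c⁻¹ * uX j * c) ^ m = c⁻¹ * (uX j) ^ m * c := by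
    have e : ∀ t : (R n)ˣ, (MulAut.conj c⁻¹) t = c⁻¹ * t * c := by
      intro t
      rw [MulAut.conj_apply, inv_inv]
    rw [← e (uX j), ← map_zpow, e]
  rw [h1, Units.val_mul, Units.val_mul, uX_zpow_val]
  show c.inv * (1 + m • dl [j]) * c.val = _
  rw [mul_add, mul_one, add_mul, Units.inv_val, mul_smul_comm, smul_mul_assoc]
  unfold conjX
  rw [← hc, mul_assoc]

theorem phiQ_NN (α : MA n j) : ((phiQ (NN j α) : (R n)ˣ) : R n) = 1 + DD j α := by
  induction α using MonoidAlgebra.induction with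
  | zero =>
    rw [NN_zero, map_one, Units.val_one, map_zero, add_zero]
  | single_add w m f hwf hm ih =>
    rw [NN_add, map_mul, Units.val_mul, phiQ_NN_single_val, ih, map_add, DD_single]
    have hcross : (m • conjX j w) * DD j f = 0 :=
      VanOff.mul_eq_zero ((conjX_vanOff j w).zsmul m) (DD_vanOff j f)
    rw [add_mul, one_mul, mul_add, mul_one, hcross, add_zero]
    abel

theorem Ehat_vanish_on_j (α : MA n j) {l : ND n} (hj : j ∈ l.1) : Ehat j α l = 0 := by
  induction α using MonoidAlgebra.induction with
  | zero => rw [map_zero]; rfl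
  | single_add w m f hwf hm ih =>
    rw [map_add, R.add_apply, ih, add_zero, Ehat_single,
      R.zsmul_apply, phi_iota_val_vanish j w hj, mul_zero]

theorem DD_at_cons (α : MA n j) (q : List (Fin n)) (hq : (j :: q).Nodup) :
    DD j α ⟨j::q, hq⟩ = Ehat j α ⟨q, (List.nodup_cons.mp hq).2⟩ := by
  induction α using MonoidAlgebra.induction with
  | zero => rw [map_zero, map_zero]; rfl
  | single_add w m f hwf hm ih =>
    rw [map_add, map_add, R.add_apply, R.add_apply, ih]
    congr 1
    rw [DD_single, Ehat_single, R.zsmul_apply, R.zsmul_apply]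
    congr 1
    -- (c.inv * dl [j] * c.val) (j::q) = c.val q
    unfold conjX
    set c := phi (iota j w) with hc
    rw [mul_assoc, R.mul_def]
    rw [Finset.sum_eq_single 0]
    · rw [app_congr' c.inv (a := (j::q).take 0) (b := []) rfl (hb := List.nodup_nil),
        app_congr' (dl [j] * c.val) (a := (j::q).drop 0) (b := j::q) rfl (hb := hq)]
      rw [show c.inv ⟨[], List.nodup_nil⟩ = 1 from phi_inv_nil (iota j w), one_mul]
      rw [dl_single_mul_apply j c.val q hq]
    · intro k hk hk0
      have hjk : j ∈ (j::q).take k := by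
        match k, hk0 with
        | (k'+1), _ => exact List.mem_cons_self
      rw [phi_iota_inv_vanish j w hjk, zero_mul]
    · intro hc'
      exact (hc' (Finset.mem_range.mpr (by simp))).elim

theorem Ehat_eq_zero_of_DD (α : MA n j) (hDD : DD j α = 0) : Ehat j α = 0 := by
  funext l
  obtain ⟨l, hl⟩ := l
  by_cases hj : j ∈ l
  · rw [Ehat_vanish_on_j j α hj]; rfl
  · have hq : (j :: l).Nodup := List.nodup_cons.mpr ⟨hj, hl⟩
    have := DD_at_cons j α l hq
    rw [hDD, R.zero_apply] at this
    rw [← this]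
    rfl

/-! ### The ideal of relations of the reduced algebra -/

noncomputable def Xe (v : {v : Fin n // v ≠ j}) : MA n j :=
  MonoidAlgebra.single (FreeGroup.of v) 1 - 1

noncomputable def ee (l : List {v : Fin n // v ≠ j}) : MA n j := (l.map (Xe j)).prod

theorem ee_nil : ee j [] = 1 := rfl

theorem ee_cons (v : {v : Fin n // v ≠ j}) (l : List {v : Fin n // v ≠ j}) :
    ee j (v :: l) = Xe j v * ee j l := by
  unfold ee
  rw [List.map_cons, List.prod_cons]

theorem ee_append (l m : List {v : Fin n // v ≠ j}) :
    ee j (l ++ m) = ee j l * ee j m := by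
  unfold ee
  rw [List.map_append, List.prod_append]

def IGen : Set (MA n j) :=
  {x | ∃ (a u b : FreeGroup {v : Fin n // v ≠ j}) (v : {v : Fin n // v ≠ j}),
    x = MonoidAlgebra.single a 1 * Xe j v * MonoidAlgebra.single u 1 * Xe j v *
      MonoidAlgebra.single b 1}

noncomputable def Isp : Submodule ℤ (MA n j) := Submodule.span ℤ (IGen j)

theorem Isp_mul_right {x : MA n j} (hx : x ∈ Isp j) (y : MA n j) : x * y ∈ Isp j := by
  induction hx using Submodule.span_induction with
  | mem x hxg =>
    obtain ⟨a, u, b, v, rfl⟩ := hxg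
    induction y using MonoidAlgebra.induction with
    | zero => rw [mul_zero]; exact zero_mem _
    | single_add c m f hcf hm ihy =>
      rw [mul_add]
      refine add_mem ?_ ihy
      have h1 : (MonoidAlgebra.single c m : MA n j) = m • MonoidAlgebra.single c 1 := by
        rw [MonoidAlgebra.smul_single]
        norm_num
      rw [h1, mul_smul_comm]
      refine Submodule.smul_mem _ _ (Submodule.subset_span ?_)
      refine ⟨a, u, b * c, v, ?_⟩
      rw [mul_assoc, MonoidAlgebra.single_mul_single, one_mul]
  | zero => rw [zero_mul]; exact zero_mem _
  | add x₁ x₂ hx₁ hx₂ ih₁ ih₂ => rw [add_mul]; exact add_mem ih₁ ih₂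
  | smul a x hx ih => rw [smul_mul_assoc]; exact Submodule.smul_mem _ _ ih

theorem Isp_mul_left {x : MA n j} (hx : x ∈ Isp j) (y : MA n j) : y * x ∈ Isp j := by
  induction hx using Submodule.span_induction with
  | mem x hxg =>
    obtain ⟨a, u, b, v, rfl⟩ := hxg
    induction y using MonoidAlgebra.induction with
    | zero => rw [zero_mul]; exact zero_mem _
    | single_add c m f hcf hm ihy =>
      rw [add_mul]
      refine add_mem ?_ ihy
      have h1 : (MonoidAlgebra.single c m : MA n j) = m • MonoidAlgebra.single c 1 := by
        rw [MonoidAlgebra.smul_single]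
        norm_num
      rw [h1, smul_mul_assoc]
      refine Submodule.smul_mem _ _ (Submodule.subset_span ?_)
      refine ⟨c * a, u, b, v, ?_⟩
      rw [show MonoidAlgebra.single c (1:ℤ) *
          (MonoidAlgebra.single a 1 * Xe j v * MonoidAlgebra.single u 1 * Xe j v *
            MonoidAlgebra.single b 1) =
          (MonoidAlgebra.single c 1 * MonoidAlgebra.single a 1) * Xe j v *
            MonoidAlgebra.single u 1 * Xe j v * MonoidAlgebra.single b 1 by
        simp only [mul_assoc]]
      rw [MonoidAlgebra.single_mul_single, one_mul]
  | zero => rw [mul_zero]; exact zero_mem _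
  | add x₁ x₂ hx₁ hx₂ ih₁ ih₂ => rw [mul_add]; exact add_mem ih₁ ih₂
  | smul a x hx ih => rw [mul_smul_comm]; exact Submodule.smul_mem _ _ ih

theorem quad_mem_single (a u : FreeGroup {v : Fin n // v ≠ j}) (δ : MA n j)
    (v : {v : Fin n // v ≠ j}) :
    MonoidAlgebra.single a 1 * Xe j v * MonoidAlgebra.single u 1 * Xe j v * δ ∈ Isp j := by
  induction δ using MonoidAlgebra.induction with
  | zero => rw [mul_zero]; exact zero_mem _
  | single_add c m f hcf hm ihy =>
    rw [mul_add]
    refine add_mem ?_ ihy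
    have h1 : (MonoidAlgebra.single c m : MA n j) = m • MonoidAlgebra.single c 1 := by
      rw [MonoidAlgebra.smul_single]; norm_num
    rw [h1, mul_smul_comm]
    exact Submodule.smul_mem _ _ (Submodule.subset_span ⟨a, u, c, v, rfl⟩)

theorem quad_mem_mid (a : FreeGroup {v : Fin n // v ≠ j}) (γ δ : MA n j)
    (v : {v : Fin n // v ≠ j}) :
    MonoidAlgebra.single a 1 * Xe j v * γ * Xe j v * δ ∈ Isp j := by
  induction γ using MonoidAlgebra.induction with
  | zero => rw [mul_zero, zero_mul, zero_mul]; exact zero_mem _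
  | single_add c m f hcf hm ihy =>
    rw [mul_add, add_mul, add_mul]
    refine add_mem ?_ ihy
    have h1 : (MonoidAlgebra.single c m : MA n j) = m • MonoidAlgebra.single c 1 := by
      rw [MonoidAlgebra.smul_single]; norm_num
    rw [h1, mul_smul_comm, smul_mul_assoc, smul_mul_assoc]
    exact Submodule.smul_mem _ _ (quad_mem_single j a c δ v)

theorem quad_mem (β γ δ : MA n j) (v : {v : Fin n // v ≠ j}) :
    β * Xe j v * γ * Xe j v * δ ∈ Isp j := by
  induction β using MonoidAlgebra.induction with
  | zero => rw [zero_mul, zero_mul, zero_mul, zero_mul]; exact zero_mem _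
  | single_add c m f hcf hm ihy =>
    rw [add_mul, add_mul, add_mul, add_mul]
    refine add_mem ?_ ihy
    have h1 : (MonoidAlgebra.single c m : MA n j) = m • MonoidAlgebra.single c 1 := by
      rw [MonoidAlgebra.smul_single]; norm_num
    rw [h1, smul_mul_assoc, smul_mul_assoc, smul_mul_assoc, smul_mul_assoc]
    exact Submodule.smul_mem _ _ (quad_mem_mid j c γ δ v)

theorem not_nodup_split {α : Type*} (l : List α) (h : ¬l.Nodup) :
    ∃ (l₁ : List α) (v : α) (l₂ l₃ : List α), l = l₁ ++ v :: (l₂ ++ v :: l₃) := by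
  induction l with
  | nil => exact absurd List.nodup_nil h
  | cons a t ih =>
    by_cases ha : a ∈ t
    · obtain ⟨s, u, rfl⟩ := List.append_of_mem ha
      exact ⟨[], a, s, u, rfl⟩
    · have ht : ¬ t.Nodup := fun hnd => h (List.nodup_cons.mpr ⟨ha, hnd⟩)
      obtain ⟨l₁, v, l₂, l₃, rfl⟩ := ih ht
      exact ⟨a :: l₁, v, l₂, l₃, rfl⟩

theorem ee_dup_mem {l : List {v : Fin n // v ≠ j}} (h : ¬l.Nodup) : ee j l ∈ Isp j := by
  obtain ⟨l₁, v, l₂, l₃, rfl⟩ := not_nodup_split _ h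
  have key : ee j (l₁ ++ v :: (l₂ ++ v :: l₃)) =
      ee j l₁ * Xe j v * ee j l₂ * Xe j v * ee j l₃ := by
    rw [ee_append, ee_cons, ee_append, ee_cons]
    simp only [mul_assoc]
  rw [key]
  exact quad_mem j _ _ _ v

/-! ### Spanning: every element decomposes as ideal part plus nodup monomial part -/

def Good (α : MA n j) : Prop :=
  ∃ x ∈ Isp j, ∃ μ : List {v : Fin n // v ≠ j} →₀ ℤ,
    (∀ l ∈ μ.support, l.Nodup) ∧ α = x + μ.sum (fun l m => m • ee j l)

theorem good_of_Isp {x : MA n j} (hx : x ∈ Isp j) : Good j x :=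
  ⟨x, hx, 0, by simp, by rw [Finsupp.sum_zero_index, add_zero]⟩

theorem good_zero : Good j (0 : MA n j) := good_of_Isp j (zero_mem _)

theorem good_ee {l : List {v : Fin n // v ≠ j}} (hl : l.Nodup) : Good j (ee j l) := by
  refine ⟨0, zero_mem _, Finsupp.single l 1, ?_, ?_⟩
  · intro l' hl'
    have := Finsupp.support_single_subset hl'
    rw [Finset.mem_singleton] at this
    rwa [this]
  · rw [Finsupp.sum_single_index (by rw [zero_smul]), one_smul, zero_add]

theorem good_one : Good j (1 : MA n j) := good_ee j (List.nodup_nil)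

theorem good_add {α β : MA n j} (ha : Good j α) (hb : Good j β) : Good j (α + β) := by
  obtain ⟨x₁, hx₁, μ₁, hs₁, rfl⟩ := ha
  obtain ⟨x₂, hx₂, μ₂, hs₂, rfl⟩ := hb
  refine ⟨x₁ + x₂, add_mem hx₁ hx₂, μ₁ + μ₂, ?_, ?_⟩
  · intro l hl
    have := Finsupp.support_add hl
    rw [Finset.mem_union] at this
    rcases this with h | h
    · exact hs₁ l h
    · exact hs₂ l h
  · rw [Finsupp.sum_add_index' (fun l => by rw [zero_smul]) (fun l m₁ m₂ => by rw [add_smul])]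
    abel

theorem good_smul (m : ℤ) {α : MA n j} (ha : Good j α) : Good j (m • α) := by
  obtain ⟨x, hx, μ, hs, rfl⟩ := ha
  refine ⟨m • x, Submodule.smul_mem _ _ hx, m • μ, ?_, ?_⟩
  · intro l hl
    exact hs l (Finsupp.support_smul hl)
  · rw [smul_add]
    congr 1
    rw [Finsupp.sum_smul_index (fun l => by rw [zero_smul])]
    rw [Finsupp.smul_sum]
    refine Finsupp.sum_congr fun l hl => ?_
    rw [mul_smul]

theorem good_neg {α : MA n j} (ha : Good j α) : Good j (-α) := by
  have := good_smul j (-1) ha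
  rwa [neg_one_smul] at this

theorem good_finset_sum {ι : Type*} (s : Finset ι) (f : ι → MA n j)
    (h : ∀ i ∈ s, Good j (f i)) : Good j (∑ i ∈ s, f i) :=
  Finset.sum_induction f (Good j) (fun _ _ => good_add j) (good_zero j) h

theorem good_ee_mul_ee (l m : List {v : Fin n // v ≠ j}) : Good j (ee j l * ee j m) := by
  rw [← ee_append]
  by_cases h : (l ++ m).Nodup
  · exact good_ee j h
  · exact good_of_Isp j (ee_dup_mem j h)

theorem good_mul {α β : MA n j} (ha : Good j α) (hb : Good j β) : Good j (α * β) := by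
  obtain ⟨x₁, hx₁, μ₁, hs₁, rfl⟩ := ha
  obtain ⟨x₂, hx₂, μ₂, hs₂, rfl⟩ := hb
  have expand : (x₁ + μ₁.sum fun l m => m • ee j l) * (x₂ + μ₂.sum fun l m => m • ee j l) =
      x₁ * (x₂ + μ₂.sum fun l m => m • ee j l) +
      (μ₁.sum fun l m => m • ee j l) * x₂ +
      (μ₁.sum fun l m => m • ee j l) * (μ₂.sum fun l m => m • ee j l) := by
    noncomm_ring
  rw [expand]
  refine good_add j (good_add j ?_ ?_) ?_
  · exact good_of_Isp j (Isp_mul_right j hx₁ _)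
  · exact good_of_Isp j (Isp_mul_left j hx₂ _)
  · unfold Finsupp.sum
    rw [Finset.sum_mul]
    refine good_finset_sum j _ _ fun l hl => ?_
    rw [Finset.mul_sum]
    refine good_finset_sum j _ _ fun l' hl' => ?_
    rw [smul_mul_assoc, mul_smul_comm]
    exact good_smul j _ (good_smul j _ (good_ee_mul_ee j l l'))

theorem inv_decomp {A : Type*} [Ring A] (s t : A) (hst : s * t = 1) :
    t = 1 - (s - 1) + (s - 1) * (s - 1) * t := by
  have h1 : (s - 1) * (s - 1) * t = s * (s * t) - s * t - (s * t - t) := by noncomm_ring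
  rw [h1, hst, mul_one]
  noncomm_ring

theorem good_single_one (w : FreeGroup {v : Fin n // v ≠ j}) :
    Good j (MonoidAlgebra.single w (1 : ℤ)) := by
  refine FreeGroup.induction_on
    (C := fun w => Good j (MonoidAlgebra.single w (1 : ℤ))) w ?_ ?_ ?_ ?_
  · show Good j (MonoidAlgebra.single (1 : FreeGroup {v : Fin n // v ≠ j}) (1 : ℤ))
    rw [← MonoidAlgebra.one_def]
    exact good_one j
  · intro v
    show Good j (MonoidAlgebra.single (FreeGroup.of v) (1 : ℤ))
    have h1 : MonoidAlgebra.single (FreeGroup.of v) (1:ℤ) = 1 + Xe j v := by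
      unfold Xe
      abel
    rw [h1]
    refine good_add j (good_one j) ?_
    rw [show Xe j v = ee j [v] by rw [ee_cons, ee_nil, mul_one]]
    exact good_ee j (List.nodup_singleton v)
  · intro v _
    show Good j (MonoidAlgebra.single ((FreeGroup.of v)⁻¹) (1 : ℤ))
    have hst : MonoidAlgebra.single (FreeGroup.of v) (1:ℤ) *
        MonoidAlgebra.single ((FreeGroup.of v)⁻¹) 1 = 1 := by
      rw [MonoidAlgebra.single_mul_single, mul_inv_cancel, one_mul, MonoidAlgebra.one_def]
    have key := inv_decomp _ _ hst
    have hXe : MonoidAlgebra.single (FreeGroup.of v) (1:ℤ) - 1 = Xe j v := rfl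
    rw [hXe] at key
    rw [key, sub_eq_add_neg]
    refine good_add j (good_add j (good_one j) (good_neg j ?_)) (good_of_Isp j ?_)
    · rw [show Xe j v = ee j [v] by rw [ee_cons, ee_nil, mul_one]]
      exact good_ee j (List.nodup_singleton v)
    · have := quad_mem j 1 1 (MonoidAlgebra.single ((FreeGroup.of v)⁻¹) (1:ℤ)) v
      rwa [one_mul, mul_one] at this
  · intro x y hx hy
    show Good j (MonoidAlgebra.single (x * y) (1 : ℤ))
    rw [show MonoidAlgebra.single (x * y) (1:ℤ) =
        MonoidAlgebra.single x 1 * MonoidAlgebra.single y 1 by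
      rw [MonoidAlgebra.single_mul_single, one_mul]]
    exact good_mul j hx hy

theorem good_all (α : MA n j) : Good j α := by
  induction α using MonoidAlgebra.induction with
  | zero => exact good_zero j
  | single_add w m f hwf hm ih =>
    refine good_add j ?_ ih
    have h1 : (MonoidAlgebra.single w m : MA n j) = m • MonoidAlgebra.single w 1 := by
      rw [MonoidAlgebra.smul_single]; norm_num
    rw [h1]
    exact good_smul j m (good_single_one j w)

/-! ### Killing the ideal under `Ê` and `Ψ` -/

theorem Ehat_Xe (v : {v : Fin n // v ≠ j}) : Ehat j (Xe j v) = dl [v.1] := by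
  unfold Xe
  rw [map_sub, map_one,
    show (MonoidAlgebra.single (FreeGroup.of v) (1:ℤ) : MA n j) =
      MonoidAlgebra.single (FreeGroup.of v) (1:ℤ) from rfl,
    Ehat_single, one_smul, iota_of, phi_of]
  show (1 + dl [v.1]) - 1 = dl [v.1]
  abel

theorem Ehat_Isp {x : MA n j} (hx : x ∈ Isp j) : Ehat j x = 0 := by
  induction hx using Submodule.span_induction with
  | mem x hxg =>
    obtain ⟨a, u, b, v, rfl⟩ := hxg
    rw [map_mul, map_mul, map_mul, map_mul, Ehat_Xe]
    set A := Ehat j (MonoidAlgebra.single a 1)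
    set U := Ehat j (MonoidAlgebra.single u 1)
    set B := Ehat j (MonoidAlgebra.single b 1)
    have h1 : VanOff v.1 (A * dl [v.1] * U) := ((vanOff_dl_single v.1).mul_left A).mul_right U
    have h2 : VanOff v.1 (dl [v.1] * B) := (vanOff_dl_single v.1).mul_right B
    have h3 := h1.mul_eq_zero h2
    calc A * dl [v.1] * U * dl [v.1] * B = (A * dl [v.1] * U) * (dl [v.1] * B) := by
          rw [mul_assoc (A * dl [v.1] * U)]
      _ = 0 := h3
  | zero => rw [map_zero]
  | add x y hx hy ihx ihy => rw [map_add, ihx, ihy, add_zero]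
  | smul m x hx ih => rw [map_zsmul, ih, smul_zero]

theorem Ehat_ee (l : List {v : Fin n // v ≠ j}) :
    Ehat j (ee j l) = dl (l.map Subtype.val) := by
  induction l with
  | nil =>
    rw [show ee j [] = (1 : MA n j) from rfl, map_one, List.map_nil, dl_nil]
  | cons v t ih =>
    rw [ee_cons, map_mul, Ehat_Xe, ih, dl_mul_dl, List.map_cons]
    rfl

theorem finsetSumApply {ι : Type*} (s : Finset ι) (f : ι → R n) (l : ND n) :
    (∑ i ∈ s, f i) l = ∑ i ∈ s, f i l :=
  Finset.sum_apply l s f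

theorem mem_Isp_of_Ehat_eq_zero {α : MA n j} (hE : Ehat j α = 0) : α ∈ Isp j := by
  obtain ⟨x, hx, μ, hsupp, hdecomp⟩ := good_all j α
  have hsum0 : (μ.sum fun l m => m • dl (l.map Subtype.val)) = (0 : R n) := by
    have h1 : Ehat j (μ.sum fun l m => m • ee j l) =
        μ.sum fun l m => m • dl (l.map Subtype.val) := by
      rw [map_finsuppSum]
      refine Finsupp.sum_congr fun l hl => ?_
      rw [map_zsmul, Ehat_ee]
    have h2 : Ehat j α = Ehat j x + Ehat j (μ.sum fun l m => m • ee j l) := by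
      rw [hdecomp, map_add]
    rw [hE, Ehat_Isp j hx, zero_add] at h2
    rw [← h1, ← h2]
  have hμ : μ = 0 := by
    ext l₀
    rw [Finsupp.coe_zero, Pi.zero_apply]
    by_cases hmem : l₀ ∈ μ.support
    · have hnd : (l₀.map Subtype.val).Nodup :=
        (List.nodup_map_iff Subtype.val_injective).mpr (hsupp l₀ hmem)
      have heval := congrFun hsum0 ⟨l₀.map Subtype.val, hnd⟩
      rw [R.zero_apply] at heval
      rw [show (μ.sum fun l m => m • dl (l.map Subtype.val)) ⟨l₀.map Subtype.val, hnd⟩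
          = ∑ l ∈ μ.support, (μ l • dl (l.map Subtype.val)) ⟨l₀.map Subtype.val, hnd⟩ from
        finsetSumApply μ.support _ _] at heval
      rw [Finset.sum_eq_single l₀] at heval
      · rw [R.zsmul_apply, dl_apply, if_pos rfl, mul_one] at heval
        exact heval
      · intro l hl hne
        rw [R.zsmul_apply, dl_apply, if_neg, mul_zero]
        intro hc
        exact hne (List.map_injective_iff.mpr Subtype.val_injective hc).symm
      · intro hc
        exact absurd hmem hc
    · exact Finsupp.notMem_support_iff.mp hmem
  rw [hμ, Finsupp.sum_zero_index, add_zero] at hdecomp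
  rw [hdecomp]
  exact hx

theorem NN_neg (α : MA n j) : NN j (-α) = (NN j α)⁻¹ := by
  unfold NN
  rw [map_neg]
  rfl

theorem NN_zsmul (m : ℤ) (α : MA n j) : NN j (m • α) = NN j α ^ m := by
  unfold NN
  rw [map_zsmul]
  exact SubgroupClass.coe_zpow _ m

theorem comm_conj_all (k : Fin n) (g h : GG n) :
    Commute (g⁻¹ * piQ (FreeGroup.of k) * g) (h⁻¹ * piQ (FreeGroup.of k) * h) := by
  obtain ⟨g', rfl⟩ := piQ_surjective g
  obtain ⟨h', rfl⟩ := piQ_surjective h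
  exact comm_conj k g' h'

theorem NN_Isp {x : MA n j} (hx : x ∈ Isp j) : NN j x = 1 := by
  induction hx using Submodule.span_induction with
  | mem x hxg =>
    obtain ⟨a, u, b, v, rfl⟩ := hxg
    have expand : MonoidAlgebra.single a 1 * Xe j v * MonoidAlgebra.single u 1 * Xe j v *
        MonoidAlgebra.single b (1:ℤ) =
        MonoidAlgebra.single (a * FreeGroup.of v * u * FreeGroup.of v * b) 1 -
        MonoidAlgebra.single (a * FreeGroup.of v * u * b) 1 -
        MonoidAlgebra.single (a * u * FreeGroup.of v * b) 1 +
        MonoidAlgebra.single (a * u * b) 1 := by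
      unfold Xe
      simp only [sub_mul, mul_sub, one_mul, mul_one, MonoidAlgebra.single_mul_single]
      abel
    rw [expand, sub_eq_add_neg, sub_eq_add_neg, NN_add, NN_add, NN_add, NN_neg, NN_neg,
      NN_single, NN_single, NN_single, NN_single, zpow_one, zpow_one, zpow_one, zpow_one]
    have e : ∀ w : FreeGroup {v : Fin n // v ≠ j}, aelt j w =
        (piQ (iota j w))⁻¹ * piQ (FreeGroup.of j) * piQ (iota j w) := fun _ => rfl
    rw [e, e, e, e]
    have em : ∀ w w' : FreeGroup {v : Fin n // v ≠ j},
        piQ (iota j (w * w')) = piQ (iota j w) * piQ (iota j w') := by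
      intro w w'; rw [map_mul, map_mul]
    have ev : piQ (iota j (FreeGroup.of v)) = piQ (FreeGroup.of v.1) := by rw [iota_of]
    rw [show piQ (iota j (a * FreeGroup.of v * u * FreeGroup.of v * b)) =
        piQ (iota j a) * piQ (FreeGroup.of v.1) * piQ (iota j u) * piQ (FreeGroup.of v.1) *
          piQ (iota j b) by rw [em, em, em, em, ev]]
    rw [show piQ (iota j (a * FreeGroup.of v * u * b)) =
        piQ (iota j a) * piQ (FreeGroup.of v.1) * piQ (iota j u) * piQ (iota j b) by
      rw [em, em, em, ev]]
    rw [show piQ (iota j (a * u * FreeGroup.of v * b)) =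
        piQ (iota j a) * piQ (iota j u) * piQ (FreeGroup.of v.1) * piQ (iota j b) by
      rw [em, em, em, ev]]
    rw [show piQ (iota j (a * u * b)) = piQ (iota j a) * piQ (iota j u) * piQ (iota j b) by
      rw [em, em]]
    -- match the bracketing of gen_identity
    have := gen_identity (piQ (FreeGroup.of j)) (piQ (FreeGroup.of v.1)) (piQ (iota j a))
      (piQ (iota j u)) (piQ (iota j b)) (fun g h => comm_conj_all j g h)
      (fun g h => comm_conj_all v.1 g h)
    convert this using 3 <;> group
  | zero => exact NN_zero j
  | add x y hx hy ihx ihy => rw [NN_add, ihx, ihy, one_mul]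
  | smul m x hx ih => rw [NN_zsmul, ih, one_zpow]

/-! ### The kernel case and the core induction -/

theorem ker_case {m : FreeGroup (Fin n)}
    (hm : m ∈ Subgroup.normalClosure ({FreeGroup.of j} : Set (FreeGroup (Fin n))))
    (hphi : phi m = 1) : m ∈ KK n := by
  have hrep : ∃ α : MA n j, piQ m = NN j α := by
    refine Subgroup.closure_induction
      (p := fun x _ => ∃ α : MA n j, piQ x = NN j α) ?_ ?_ ?_ ?_ hm
    · intro x hx
      rw [Group.mem_conjugatesOfSet_iff] at hx
      obtain ⟨a', ha', hconj⟩ := hx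
      rw [Set.mem_singleton_iff] at ha'
      subst ha'
      rw [isConj_iff] at hconj
      obtain ⟨c, hc⟩ := hconj
      refine ⟨MonoidAlgebra.single (kap' j c⁻¹) 1, ?_⟩
      rw [NN_single, zpow_one]
      have h1 : aelt j (kap' j c⁻¹) =
          (piQ (kap j c⁻¹))⁻¹ * piQ (FreeGroup.of j) * piQ (kap j c⁻¹) := rfl
      rw [h1, ← strip j c⁻¹, ← hc, map_mul, map_mul, map_inv]
      group
    · exact ⟨0, by rw [map_one, NN_zero]⟩
    · rintro x y hx hy ⟨α, hα⟩ ⟨β, hβ⟩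
      exact ⟨α + β, by rw [map_mul, NN_add, hα, hβ]⟩
    · rintro x hx ⟨α, hα⟩
      exact ⟨-α, by rw [map_inv, NN_neg, hα]⟩
  obtain ⟨α, hα⟩ := hrep
  have h1 : ((phiQ (piQ m) : (R n)ˣ) : R n) = 1 := by
    rw [phiQ_piQ, hphi, Units.val_one]
  rw [hα, phiQ_NN] at h1
  have hDD : DD j α = 0 := by
    have h2 : (1 : R n) + DD j α = 1 + 0 := by rw [add_zero]; exact h1
    exact add_left_cancel h2
  have hIsp := mem_Isp_of_Ehat_eq_zero j (Ehat_eq_zero_of_DD j α hDD)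
  have hNN := NN_Isp j hIsp
  exact (piQ_eq_one_iff m).mp (hα.trans hNN)

end MAlg

theorem phi_kap (j : Fin n) (g : FreeGroup (Fin n)) :
    phi (kap j g) = Units.map (kill j).toMonoidHom (phi g) := by
  have key : phi.comp (kap j) = (Units.map (kill j).toMonoidHom).comp phi := by
    refine FreeGroup.ext_hom _ _ fun y => ?_
    show phi (kap j (FreeGroup.of y)) = Units.map (kill j).toMonoidHom (phi (FreeGroup.of y))
    rw [phi_of]
    by_cases hy : y = j
    · rw [hy, kap_of_self, map_one]
      symm
      refine Units.ext ?_
      rw [Units.coe_map]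
      show kill j ((1 + dl [j] : R n)) = 1
      funext l
      rw [kill_apply]
      by_cases hj : j ∈ l.1
      · have h1 : l.1 ≠ [] := by rintro h; rw [h] at hj; simp at hj
        rw [if_pos hj, R.one_def, if_neg h1]
      · rw [if_neg hj, R.add_apply, dl_apply, if_neg, add_zero]
        intro hc
        rw [hc] at hj
        exact hj (List.mem_singleton_self j)
    · rw [kap_of_ne hy, phi_of]
      symm
      refine Units.ext ?_
      rw [Units.coe_map]
      show kill j ((1 + dl [y] : R n)) = 1 + dl [y]
      funext l
      rw [kill_apply]
      by_cases hj : j ∈ l.1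
      · rw [if_pos hj]
        have h1 : l.1 ≠ [] := by rintro h; rw [h] at hj; simp at hj
        have h2 : l.1 ≠ [y] := by
          rintro h; rw [h] at hj
          have : j = y := by simpa using hj
          exact hy this.symm
        rw [R.add_apply, R.one_def, dl_apply, if_neg h1, if_neg h2]
        norm_num
      · rw [if_neg hj]
  exact DFunLike.congr_fun key g

theorem closure_univ_top (g : FreeGroup (Fin n)) :
    g ∈ Subgroup.closure
      (FreeGroup.of '' ((Finset.univ : Finset (Fin n)) : Set (Fin n))) := by
  rw [Finset.coe_univ, Set.image_univ, FreeGroup.closure_range_of]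
  trivial

theorem core (N : ℕ) : ∀ (S : Finset (Fin n)), S.card ≤ N →
    ∀ g ∈ Subgroup.closure (FreeGroup.of '' (S : Set (Fin n))),
      (∀ l : List (Fin n), l.Nodup → l ≠ [] → magnus g l = 0) → g ∈ KK n := by
  induction N with
  | zero =>
    intro S hS g hg _
    have hS0 : S = ∅ := Finset.card_eq_zero.mp (le_antisymm hS (Nat.zero_le _))
    subst hS0
    rw [Finset.coe_empty, Set.image_empty, Subgroup.closure_empty, Subgroup.mem_bot] at hg
    rw [hg]
    exact one_mem _
  | succ N ih =>
    intro S hS g hg hcoeff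
    rcases Finset.eq_empty_or_nonempty S with rfl | ⟨j, hj⟩
    · rw [Finset.coe_empty, Set.image_empty, Subgroup.closure_empty, Subgroup.mem_bot] at hg
      rw [hg]
      exact one_mem _
    · have hphig : phi g = 1 := by
        refine Units.ext ?_
        funext l
        obtain ⟨l, hl⟩ := l
        by_cases hnil : l = []
        · subst hnil
          rw [phi_val_nil, Units.val_one, R.one_def, if_pos rfl]
        · rw [← magnus_eq g l hl, hcoeff l hl hnil, Units.val_one, R.one_def, if_neg hnil]
      have hgk : kap j g ∈ Subgroup.closure
          (FreeGroup.of '' ((S.erase j) : Set (Fin n))) := by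
        have h1 : kap j g ∈ Subgroup.map (kap j) (Subgroup.closure
            (FreeGroup.of '' (S : Set (Fin n)))) := ⟨g, hg, rfl⟩
        rw [MonoidHom.map_closure] at h1
        have h2 : (kap j) '' (FreeGroup.of '' (S : Set (Fin n))) ⊆
            ↑(Subgroup.closure (FreeGroup.of '' ((S.erase j) : Set (Fin n)))) := by
          rintro x ⟨y, ⟨s, hsS, rfl⟩, rfl⟩
          by_cases hs : s = j
          · subst hs
            rw [kap_of_self]
            exact one_mem _
          · rw [kap_of_ne hs]
            exact Subgroup.subset_closure ⟨s, Finset.mem_coe.mpr (Finset.mem_erase.mpr ⟨hs, hsS⟩), rfl⟩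
        exact (Subgroup.closure_le _).mpr h2 h1
      have hcoeff' : ∀ l : List (Fin n), l.Nodup → l ≠ [] → magnus (kap j g) l = 0 := by
        intro l hl hnil
        rw [magnus_eq _ l hl, phi_kap, hphig, map_one, Units.val_one, R.one_def, if_neg hnil]
      have hcard : (S.erase j).card ≤ N := by
        rw [Finset.card_erase_of_mem hj]
        omega
      have hker := ih (S.erase j) hcard (kap j g) hgk hcoeff'
      have hphikap : phi (kap j g) = 1 := phi_K hker
      have hphix : phi (g * (kap j g)⁻¹) = 1 := by
        rw [map_mul, map_inv, hphig, hphikap, inv_one, mul_one]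
      have hm := ker_case j (mem_ncl_kap j g) hphix
      have hrw : g = (g * (kap j g)⁻¹) * kap j g := by group
      rw [hrw]
      exact mul_mem hm hker

theorem backward_dir {i : Fin n} {g : FreeGroup (Fin n)}
    (h : ∀ l : List (Fin n), l ≠ [] → l.Nodup → magnus g l ≠ 0 → i ∈ l) :
    (FreeGroup.of i)⁻¹ * g⁻¹ * FreeGroup.of i * g ∈ KK n := by
  have hcoeff : ∀ l : List (Fin n), l.Nodup → l ≠ [] → magnus (kap i g) l = 0 := by
    intro l hl hnil
    rw [magnus_eq _ l hl]
    rw [show (phi (kap i g)).val ⟨l, hl⟩ = kill i ((phi g).val) ⟨l, hl⟩ by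
      rw [phi_kap]; rfl]
    rw [kill_apply]
    by_cases hi : i ∈ l
    · rw [if_pos hi]
    · rw [if_neg hi, ← magnus_eq g l hl]
      by_contra hne
      exact hi (h l hnil hl hne)
  have hgk : kap i g ∈ Subgroup.closure
      (FreeGroup.of '' ((Finset.univ : Finset (Fin n)) : Set (Fin n))) :=
    closure_univ_top _
  have hker : kap i g ∈ KK n :=
    core (Finset.univ : Finset (Fin n)).card Finset.univ le_rfl (kap i g) hgk hcoeff
  have hmem : piQ g ∈ HH i := by
    have h1 : piQ (g * (kap i g)⁻¹) ∈ HH i := piQ_mem_HH_of_ncl (mem_ncl_kap i g)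
    have h2 : piQ (kap i g) = 1 := (piQ_eq_one_iff _).mpr hker
    have h3 : piQ g = piQ (g * (kap i g)⁻¹) * piQ (kap i g) := by
      rw [← map_mul]
      congr 1
      group
    rw [h3, h2, mul_one]
    exact h1
  have hx : piQ (n := n) (FreeGroup.of i) ∈ HH i := Subgroup.subset_normalClosure rfl
  have hcomm := HH_comm i _ hx _ hmem
  rw [← piQ_eq_one_iff]
  rw [map_mul, map_mul, map_mul, map_inv, map_inv]
  have hc := hcomm.eq
  calc (piQ (FreeGroup.of i))⁻¹ * (piQ g)⁻¹ * piQ (FreeGroup.of i) * piQ g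
      = (piQ (FreeGroup.of i))⁻¹ * (piQ g)⁻¹ * (piQ (FreeGroup.of i) * piQ g) := by group
    _ = (piQ (FreeGroup.of i))⁻¹ * (piQ g)⁻¹ * (piQ g * piQ (FreeGroup.of i)) := by rw [hc]
    _ = 1 := by group


end R
end RFproof


/-- [x_i, g] is trivial in RF_n iff every non-repeated monomial of E(g) - 1
with nonzero coefficient contains the variable X_i. -/
theorem commutator_trivial_iff {n : ℕ} (i : Fin n) (g : FreeGroup (Fin n)) :
    (FreeGroup.of i)⁻¹ * g⁻¹ * FreeGroup.of i * g ∈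
        Subgroup.normalClosure (redRelators n) ↔
      ∀ l : List (Fin n), l ≠ [] → l.Nodup → magnus g l ≠ 0 → i ∈ l :=
  ⟨RFproof.R.forward_dir, RFproof.R.backward_dir⟩
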